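/- In a cycle set S, the element Ω_k(t_1,...,t_k), defined inductively by Ω_1(x_1) = x_1 and Ω_k(x_1,...,x_k) = Ω_{k-1}(x_1,...,x_{k-1}) * Ω_{k-1}(x_1,...,x_{k-2},x_k), is invariant under any permutation of the first k−1 entries. -/

import Mathlib

/-- Dehornoy's `Ω` expression: `Omega op k t` is `Ω_{k+1}(t 0, …, t k)`,
defined by `Ω_1(x) = x` and
`Ω_k(x_1,…,x_k) = Ω_{k-1}(x_1,…,x_{k-1}) * Ω_{k-1}(x_1,…,x_{k-2},x_k)`. -/
def Omega {S : Type*} (op : S → S → S) : (k : ℕ) → (Fin (k + 1) → S) → S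
  | 0, t => t 0
  | k + 1, t =>
      op (Omega op k fun i => t i.castSucc)
        (Omega op k fun i =>
          if i = Fin.last k then t (Fin.last (k + 1)) else t i.castSucc)

namespace OmegaAux
variable {S : Type*} (op : S → S → S)

def upd (k : ℕ) (t : Fin (k+2) → S) (w : S) : Fin (k+1) → S :=
  fun i => if i = Fin.last k then w else t i.castSucc

lemma omega_succ (k : ℕ) (t : Fin (k+2) → S) :
    Omega op (k+1) t =
      op (Omega op k (upd k t (t (Fin.castSucc (Fin.last k)))))
        (Omega op k (upd k t (t (Fin.last (k+1))))) := by
  show op (Omega op k fun i => t i.castSucc) _ = _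
  congr 1
  congr 1
  funext i
  by_cases h : i = Fin.last k
  · subst h; simp [upd]
  · simp [upd, h]

def Hfun (k : ℕ) (t : Fin (k+3) → S) (v : S) : Fin (k+1) → S :=
  fun i => if i = Fin.last k then v else t i.castSucc.castSucc

lemma omega_two (k : ℕ) (t : Fin (k+3) → S) :
    Omega op (k+2) t =
      op (op (Omega op k (Hfun k t (t ⟨k, by omega⟩)))
            (Omega op k (Hfun k t (t ⟨k+1, by omega⟩))))
        (op (Omega op k (Hfun k t (t ⟨k, by omega⟩)))
            (Omega op k (Hfun k t (t ⟨k+2, by omega⟩)))) := by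
  rw [omega_succ, omega_succ op k, omega_succ op k]
  have hup : ∀ w v, upd k (upd (k+1) t w) v = Hfun k t v := by
    intro w v; funext i
    by_cases h : i = Fin.last k
    · simp [upd, Hfun, h]
    · have : i.castSucc ≠ Fin.last (k+1) := by
        simp [Fin.ext_iff]; omega
      simp [upd, Hfun, h, this]
  have h1 : ∀ w, upd (k+1) t w (Fin.castSucc (Fin.last k)) = t ⟨k, by omega⟩ := by
    intro w
    have : (Fin.castSucc (Fin.last k) : Fin (k+2)) ≠ Fin.last (k+1) := by
      simp [Fin.ext_iff]
    simp [upd, this]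
    congr 1
  have h2 : ∀ w, upd (k+1) t w (Fin.last (k+1)) = w := by
    intro w; simp [upd]
  rw [h1, h1, h2, h2, hup, hup, hup, hup]
  rfl

lemma swap_hard (hcs : ∀ s t u : S, op (op s t) (op s u) = op (op t s) (op t u))
    (k : ℕ) (t : Fin (k+3) → S) :
    Omega op (k+2) (t ∘ Equiv.swap ⟨k, by omega⟩ ⟨k+1, by omega⟩) = Omega op (k+2) t := by
  set σ : Equiv.Perm (Fin (k+3)) := Equiv.swap ⟨k, by omega⟩ ⟨k+1, by omega⟩ with hσdef
  rw [omega_two, omega_two]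
  have hH : ∀ v, Hfun k (t ∘ σ) v = Hfun k t v := by
    intro v; funext i
    by_cases h : i = Fin.last k
    · simp [Hfun, h]
    · have hi : i.1 < k :=
        lt_of_le_of_ne (Nat.lt_succ_iff.mp i.2) (fun hc => h (Fin.ext (by simp [hc])))
      have h1 : (i.castSucc.castSucc : Fin (k+3)) ≠ ⟨k, by omega⟩ := by
        simp [Fin.ext_iff]; omega
      have h2 : (i.castSucc.castSucc : Fin (k+3)) ≠ ⟨k+1, by omega⟩ := by
        simp [Fin.ext_iff]; omega
      simp [Hfun, h, hσdef, Function.comp, Equiv.swap_apply_of_ne_of_ne h1 h2]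
  have e1 : (t ∘ σ) ⟨k, by omega⟩ = t ⟨k+1, by omega⟩ := by
    simp [hσdef, Function.comp]
  have e2 : (t ∘ σ) ⟨k+1, by omega⟩ = t ⟨k, by omega⟩ := by
    simp [hσdef, Function.comp]
  have e3 : (t ∘ σ) ⟨k+2, by omega⟩ = t ⟨k+2, by omega⟩ := by
    have h1 : (⟨k+2, by omega⟩ : Fin (k+3)) ≠ ⟨k, by omega⟩ := by simp [Fin.ext_iff]
    have h2 : (⟨k+2, by omega⟩ : Fin (k+3)) ≠ ⟨k+1, by omega⟩ := by simp [Fin.ext_iff]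
    simp [hσdef, Function.comp, Equiv.swap_apply_of_ne_of_ne h1 h2]
  rw [e1, e2, e3, hH, hH, hH]
  exact hcs _ _ _

lemma castSucc_swap (n p : ℕ) (h2 : p + 1 < n + 1) (i : Fin (n+1)) :
    (Fin.castSucc ((Equiv.swap ⟨p, by omega⟩ ⟨p+1, h2⟩) i) : Fin (n+2)) =
      Equiv.swap (⟨p, by omega⟩ : Fin (n+2)) ⟨p+1, by omega⟩ i.castSucc := by
  simp only [Equiv.swap_apply_def, Fin.ext_iff, Fin.coe_castSucc]
  split_ifs <;> simp_all [Fin.ext_iff] <;> omega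

lemma swap_adj (hcs : ∀ s t u : S, op (op s t) (op s u) = op (op t s) (op t u)) :
    ∀ (k p : ℕ) (hp : p + 1 < k) (t : Fin (k+1) → S),
    Omega op k (t ∘ Equiv.swap ⟨p, by omega⟩ ⟨p+1, by omega⟩) = Omega op k t := by
  intro k
  induction k with
  | zero => omega
  | succ m IH =>
    cases m with
    | zero => intro p hp t; exact absurd hp (by omega)
    | succ n =>
    intro p hp t
    by_cases hpm : p = n
    · subst hpm; exact swap_hard op hcs _ t
    · have hp1 : p + 1 < n + 1 := by omega
      set σ : Equiv.Perm (Fin (n+3)) := Equiv.swap ⟨p, by omega⟩ ⟨p+1, by omega⟩ with hσdef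
      set σ' : Equiv.Perm (Fin (n+2)) := Equiv.swap ⟨p, by omega⟩ ⟨p+1, by omega⟩ with hσ'def
      have hfix : ∀ j : Fin (n+3), j.1 > p + 1 → σ j = j := by
        intro j hj
        apply Equiv.swap_apply_of_ne_of_ne
        · intro hc; rw [Fin.ext_iff] at hc; simp at hc; omega
        · intro hc; rw [Fin.ext_iff] at hc; simp at hc; omega
      have hfix' : σ' (Fin.last (n+1)) = Fin.last (n+1) := by
        apply Equiv.swap_apply_of_ne_of_ne
        · intro hc; rw [Fin.ext_iff] at hc; simp at hc; omega
        · intro hc; rw [Fin.ext_iff] at hc; simp at hc; omega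
      have hcomm : ∀ w, upd (n+1) (t ∘ σ) w = (upd (n+1) t w) ∘ σ' := by
        intro w; funext i
        by_cases h : i = Fin.last (n+1)
        · subst h
          simp [upd, hfix']
        · have hlast : σ' i ≠ Fin.last (n+1) := by
            intro hc
            apply h
            have h2 := congrArg σ'.symm hc
            rw [Equiv.symm_apply_apply] at h2
            rw [h2]
            show σ'⁻¹ _ = _
            rw [hσ'def, Equiv.swap_inv, ← hσ'def]
            exact hfix'
          show (if i = Fin.last (n+1) then w else (t ∘ σ) i.castSucc) =
            (if σ' i = Fin.last (n+1) then w else t (σ' i).castSucc)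
          rw [if_neg h, if_neg hlast]
          show t (σ i.castSucc) = t (σ' i).castSucc
          congr 1
          exact (castSucc_swap (n+1) p (by omega) i).symm
      rw [omega_succ, omega_succ op (n+1) t]
      have hc : σ (Fin.castSucc (Fin.last (n+1))) = Fin.castSucc (Fin.last (n+1)) := by
        apply hfix; simp; omega
      have hl : σ (Fin.last (n+2)) = Fin.last (n+2) := by
        apply hfix; simp; omega
      have g1 : (t ∘ σ) (Fin.castSucc (Fin.last (n+1))) = t (Fin.castSucc (Fin.last (n+1))) := by
        simp only [Function.comp_apply, hc]
      have g2 : (t ∘ σ) (Fin.last (n+2)) = t (Fin.last (n+2)) := by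
        simp only [Function.comp_apply, hl]
      rw [g1, g2, hcomm, hcomm, IH p (by omega), IH p (by omega)]

lemma P_mul {k : ℕ} {σ τ : Equiv.Perm (Fin (k+1))}
    (hσ : ∀ t, Omega op k (t ∘ σ) = Omega op k t)
    (hτ : ∀ t, Omega op k (t ∘ τ) = Omega op k t) :
    ∀ t, Omega op k (t ∘ (σ * τ)) = Omega op k t := by
  intro t
  have h : (t ∘ ⇑(σ * τ)) = (t ∘ ⇑σ) ∘ ⇑τ := rfl
  rw [h, hτ, hσ]

lemma P_swap_dist (hcs : ∀ s t u : S, op (op s t) (op s u) = op (op t s) (op t u)) :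
    ∀ (d k a b : ℕ) (hab : b = a + d + 1) (hb : b < k) (t : Fin (k+1) → S),
    Omega op k (t ∘ Equiv.swap ⟨a, by omega⟩ ⟨b, by omega⟩) = Omega op k t := by
  intro d
  induction d with
  | zero =>
    intro k a b hab hb t
    subst hab
    exact swap_adj op hcs k a (by omega) t
  | succ d IH =>
    intro k a b hab hb t
    subst hab
    have hb : a + d + 1 + 1 < k := by omega
    have hb2 : a + d + 1 + 1 < k + 1 := by omega
    have hm : a + d + 1 < k + 1 := by omega
    have ha2 : a < k + 1 := by omega
    set c : Equiv.Perm (Fin (k+1)) := Equiv.swap ⟨a+d+1, hm⟩ ⟨a+d+1+1, hb2⟩ with hcdef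
    have h1 : c ⟨a, ha2⟩ = ⟨a, ha2⟩ := by
      apply Equiv.swap_apply_of_ne_of_ne
      · intro hc; rw [Fin.ext_iff] at hc; simp at hc; omega
      · intro hc; rw [Fin.ext_iff] at hc; simp at hc; omega
    have h2 : c ⟨a+d+1, hm⟩ = ⟨a+d+1+1, hb2⟩ := Equiv.swap_apply_left _ _
    have hkey : Equiv.swap (⟨a, ha2⟩ : Fin (k+1)) ⟨a+d+1+1, hb2⟩
        = c * Equiv.swap ⟨a, ha2⟩ ⟨a+d+1, hm⟩ * c := by
      calc Equiv.swap (⟨a, ha2⟩ : Fin (k+1)) ⟨a+d+1+1, hb2⟩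
          = Equiv.swap (c ⟨a, ha2⟩) (c ⟨a+d+1, hm⟩) := by rw [h1, h2]
        _ = c * Equiv.swap ⟨a, ha2⟩ ⟨a+d+1, hm⟩ * c⁻¹ := Equiv.swap_apply_apply c _ _
        _ = c * Equiv.swap ⟨a, ha2⟩ ⟨a+d+1, hm⟩ * c := by rw [hcdef, Equiv.swap_inv]
    have hc : ∀ t : Fin (k+1) → S, Omega op k (t ∘ c) = Omega op k t := by
      intro t
      exact swap_adj op hcs k (a+d+1) (by omega) t
    have hmid : ∀ t : Fin (k+1) → S,
        Omega op k (t ∘ Equiv.swap ⟨a, ha2⟩ ⟨a+d+1, hm⟩) = Omega op k t := by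
      intro t
      exact IH k a (a+d+1) rfl (by omega) t
    show Omega op k (t ∘ ⇑(Equiv.swap (⟨a, ha2⟩ : Fin (k+1)) ⟨a+d+1+1, hb2⟩)) = Omega op k t
    rw [hkey]
    exact P_mul op (P_mul op hc hmid) hc t

lemma P_swap (hcs : ∀ s t u : S, op (op s t) (op s u) = op (op t s) (op t u))
    (k : ℕ) (a b : Fin (k+1)) (hab : a ≠ b) (ha : a ≠ Fin.last k) (hb : b ≠ Fin.last k)
    (t : Fin (k+1) → S) : Omega op k (t ∘ Equiv.swap a b) = Omega op k t := by
  have ha' : a.1 < k :=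
    lt_of_le_of_ne (Nat.lt_succ_iff.mp a.2) (fun hc => ha (Fin.ext (by simp [hc])))
  have hb' : b.1 < k :=
    lt_of_le_of_ne (Nat.lt_succ_iff.mp b.2) (fun hc => hb (Fin.ext (by simp [hc])))
  rcases Nat.lt_trichotomy a.1 b.1 with h|h|h
  · obtain ⟨d, hd⟩ : ∃ d, b.1 = a.1 + d + 1 := ⟨b.1 - a.1 - 1, by omega⟩
    exact P_swap_dist op hcs d k a.1 b.1 hd hb' t
  · exact absurd (Fin.ext h) hab
  · obtain ⟨d, hd⟩ : ∃ d, a.1 = b.1 + d + 1 := ⟨a.1 - b.1 - 1, by omega⟩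
    rw [Equiv.swap_comm]
    exact P_swap_dist op hcs d k b.1 a.1 hd ha' t

end OmegaAux

/-- In a cycle set, `Ω_k` is invariant under any permutation of the first `k-1` entries
(i.e. any permutation fixing the last entry). -/
theorem Omega_perm_invariant {S : Type*} (op : S → S → S)
    (hbij : ∀ s : S, Function.Bijective (op s))
    (hcs : ∀ s t u : S, op (op s t) (op s u) = op (op t s) (op t u))
    (k : ℕ) (t : Fin (k + 1) → S) (σ : Equiv.Perm (Fin (k + 1)))
    (hσ : σ (Fin.last k) = Fin.last k) :
    Omega op k (t ∘ σ) = Omega op k t := by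
  have key : ∀ σ' : Equiv.Perm {i : Fin (k+1) // i ≠ Fin.last k},
      ∀ t : Fin (k+1) → S,
      Omega op k (t ∘ (Equiv.Perm.ofSubtype σ')) = Omega op k t := by
    intro σ'
    refine Equiv.Perm.swap_induction_on σ' (fun t => ?_) (fun f x y hxy IH t => ?_)
    · rw [map_one]
      simp
    · rw [map_mul, Equiv.Perm.ofSubtype_swap_eq]
      have h : t ∘ ⇑(Equiv.swap (x : Fin (k+1)) (y : Fin (k+1)) * Equiv.Perm.ofSubtype f)
          = (t ∘ ⇑(Equiv.swap (x : Fin (k+1)) (y : Fin (k+1)))) ∘ ⇑(Equiv.Perm.ofSubtype f) := rfl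
      rw [h, IH]
      exact OmegaAux.P_swap op hcs k x y (Subtype.coe_injective.ne hxy) x.2 y.2 t
  have h₁ : ∀ i : Fin (k+1), i ≠ Fin.last k ↔ σ i ≠ Fin.last k := by
    intro i
    apply not_iff_not.mpr
    constructor
    · intro h; rw [h, hσ]
    · intro h; exact σ.injective (by rw [h, hσ])
  have h₂ : ∀ i : Fin (k+1), σ i ≠ i → i ≠ Fin.last k := by
    intro i hi hc
    subst hc
    exact hi hσ
  have hsub : Equiv.Perm.ofSubtype (σ.subtypePerm (fun i => (h₁ i).symm)) = σ :=
    Equiv.Perm.ofSubtype_subtypePerm (fun i => (h₁ i).symm) h₂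
  rw [← hsub]
  exact key _ t
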